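/- arXiv:1606.01414 — 2 statements merged into one kernel-verified Lean document; each statement's English description precedes it below -/
import Mathlib

section
/- Let A be a finite abelian group. The subgroup Quad₀(A, ℝ/ℤ) = {q ∈ Quad(A, ℝ/ℤ) : o(a)·q(a) = 0 for all a ∈ A}, where o(a) denotes the order of a, is isomorphic to Hom(S²(A), ℝ/ℤ). -/
variable {A B : Type*} [AddCommGroup A] [AddCommGroup B]

/-- The polarization of a map between abelian groups. -/
def polz (γ : A → B) (x y : A) : B := γ (x + y) - γ x - γ y

/-- A quadratic form between abelian groups: even, with bilinear polarization. -/
def IsQuadratic (γ : A → B) : Prop :=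
  (∀ a, γ a = γ (-a)) ∧
  (∀ x x' y, polz γ (x + x') y = polz γ x y + polz γ x' y) ∧
  (∀ x y y', polz γ x (y + y') = polz γ x y + polz γ x y')

lemma polz_add_fun (f g : A → B) (x y : A) :
    polz (f + g) x y = polz f x y + polz g x y := by
  simp only [polz, Pi.add_apply]; abel

lemma polz_neg_fun (f : A → B) (x y : A) :
    polz (-f) x y = - polz f x y := by
  simp only [polz, Pi.neg_apply]; abel

/-- The group of `ℝ/ℤ`-valued quadratic forms on `A`. -/
noncomputable def QuadGroup (A : Type*) [AddCommGroup A] : AddSubgroup (A → AddCircle (1 : ℝ)) where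
  carrier := {γ | IsQuadratic γ}
  zero_mem' := ⟨fun _ => rfl, fun _ _ _ => by simp [polz], fun _ _ _ => by simp [polz]⟩
  add_mem' := by
    rintro f g ⟨hf1, hf2, hf3⟩ ⟨hg1, hg2, hg3⟩
    refine ⟨fun a => by simp only [Pi.add_apply, hf1 a, hg1 a], fun x x' y => ?_,
      fun x y y' => ?_⟩
    · rw [polz_add_fun, polz_add_fun, polz_add_fun, hf2, hg2]; abel
    · rw [polz_add_fun, polz_add_fun, polz_add_fun, hf3, hg3]; abel
  neg_mem' := by
    rintro f ⟨hf1, hf2, hf3⟩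
    refine ⟨fun a => by simp only [Pi.neg_apply, hf1 a], fun x x' y => ?_, fun x y y' => ?_⟩
    · rw [polz_neg_fun, polz_neg_fun, polz_neg_fun, hf2]; abel
    · rw [polz_neg_fun, polz_neg_fun, polz_neg_fun, hf3]; abel

/-- The subgroup `Quad₀(A,ℝ/ℤ)` of quadratic forms with `o(a)·q(a) = 0` for all `a`. -/
noncomputable def quadGroup0 (A : Type*) [AddCommGroup A] :
    AddSubgroup (A → AddCircle (1 : ℝ)) where
  carrier := {γ | IsQuadratic γ ∧ ∀ a : A, addOrderOf a • γ a = 0}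
  zero_mem' := ⟨(QuadGroup A).zero_mem, fun a => smul_zero _⟩
  add_mem' := by
    rintro f g ⟨hf, hf0⟩ ⟨hg, hg0⟩
    exact ⟨(QuadGroup A).add_mem hf hg,
      fun a => by simp only [Pi.add_apply, smul_add, hf0 a, hg0 a, add_zero]⟩
  neg_mem' := by
    rintro f ⟨hf, hf0⟩
    exact ⟨(QuadGroup A).neg_mem hf,
      fun a => by simp only [Pi.neg_apply, smul_neg, hf0 a, neg_zero]⟩

open TensorProduct in
/-- The second symmetric power `S²(A) = (A ⊗ A)/⟨a⊗b - b⊗a⟩` of `A` as a ℤ-module. -/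
abbrev symPower2 (A : Type*) [AddCommGroup A] :=
  (TensorProduct ℤ A A) ⧸
    (Submodule.span ℤ {x : TensorProduct ℤ A A | ∃ a b : A, x = a ⊗ₜ[ℤ] b - b ⊗ₜ[ℤ] a})


/-! ### Auxiliary development -/

section Aux

open DirectSum

variable {X Y N : Type*} [AddCommGroup X] [AddCommGroup Y] [AddCommGroup N]

lemma polz_symm (γ : X → N) (x y : X) : polz γ x y = polz γ y x := by
  unfold polz
  rw [add_comm x y]
  abel

namespace IsQuadratic

variable {γ : X → N}

lemma polz_zero_left (h : IsQuadratic γ) (y : X) : polz γ 0 y = 0 := by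
  have h0 : polz γ 0 y = polz γ 0 y + polz γ 0 y := by simpa using h.2.1 0 0 y
  exact left_eq_add.mp h0

lemma quad_map_zero (h : IsQuadratic γ) : γ 0 = 0 := by
  have := h.polz_zero_left 0
  simp only [polz, add_zero, sub_self, zero_sub, neg_eq_zero] at this
  exact this

lemma polz_zero_right (h : IsQuadratic γ) (x : X) : polz γ x 0 = 0 := by
  rw [polz_symm]; exact h.polz_zero_left x

lemma polz_nsmul_left (h : IsQuadratic γ) (m : ℕ) (x y : X) : polz γ (m • x) y = m • polz γ x y := by
  induction m with
  | zero => simpa using h.polz_zero_left y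
  | succ t ih => rw [succ_nsmul, h.2.1, ih, succ_nsmul]

lemma polz_nsmul_right (h : IsQuadratic γ) (m : ℕ) (x y : X) : polz γ x (m • y) = m • polz γ x y := by
  rw [polz_symm, h.polz_nsmul_left, polz_symm]

lemma polz_neg_right (h : IsQuadratic γ) (x y : X) : polz γ x (-y) = - polz γ x y := by
  have h2 := h.2.2 x y (-y)
  rw [add_neg_cancel, h.polz_zero_right] at h2
  exact (eq_neg_of_add_eq_zero_right h2.symm)

lemma polz_self (h : IsQuadratic γ) (x : X) : polz γ x x = γ x + γ x := by
  have h1 : polz γ x (-x) = -(γ x + γ x) := by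
    rw [polz, add_neg_cancel, h.quad_map_zero, ← h.1 x]
    abel
  have h2 := h.polz_neg_right x x
  rw [h1] at h2
  exact (neg_injective h2).symm

end IsQuadratic

lemma polz_sub_fun (f g : X → N) (x y : X) :
    polz (f - g) x y = polz f x y - polz g x y := by
  simp only [polz, Pi.sub_apply]; abel

/-- The generalization of `QuadGroup` to an arbitrary target group. -/
noncomputable def QuadGroup' (X N : Type*) [AddCommGroup X] [AddCommGroup N] :
    AddSubgroup (X → N) where
  carrier := {γ | IsQuadratic γ}
  zero_mem' := ⟨fun _ => rfl, fun _ _ _ => by simp [polz], fun _ _ _ => by simp [polz]⟩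
  add_mem' := by
    rintro f g ⟨hf1, hf2, hf3⟩ ⟨hg1, hg2, hg3⟩
    refine ⟨fun a => by simp only [Pi.add_apply, hf1 a, hg1 a], fun x x' y => ?_,
      fun x y y' => ?_⟩
    · rw [polz_add_fun, polz_add_fun, polz_add_fun, hf2, hg2]; abel
    · rw [polz_add_fun, polz_add_fun, polz_add_fun, hf3, hg3]; abel
  neg_mem' := by
    rintro f ⟨hf1, hf2, hf3⟩
    refine ⟨fun a => by simp only [Pi.neg_apply, hf1 a], fun x x' y => ?_, fun x y y' => ?_⟩
    · rw [polz_neg_fun, polz_neg_fun, polz_neg_fun, hf2]; abel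
    · rw [polz_neg_fun, polz_neg_fun, polz_neg_fun, hf3]; abel

/-- The generalization of `quadGroup0` to an arbitrary target group. -/
noncomputable def quadGroup0' (X N : Type*) [AddCommGroup X] [AddCommGroup N] :
    AddSubgroup (X → N) where
  carrier := {γ | IsQuadratic γ ∧ ∀ a : X, addOrderOf a • γ a = 0}
  zero_mem' := ⟨(QuadGroup' X N).zero_mem, fun a => smul_zero _⟩
  add_mem' := by
    rintro f g ⟨hf, hf0⟩ ⟨hg, hg0⟩
    exact ⟨(QuadGroup' X N).add_mem hf hg,
      fun a => by simp only [Pi.add_apply, smul_add, hf0 a, hg0 a, add_zero]⟩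
  neg_mem' := by
    rintro f ⟨hf, hf0⟩
    exact ⟨(QuadGroup' X N).neg_mem hf,
      fun a => by simp only [Pi.neg_apply, smul_neg, hf0 a, neg_zero]⟩

lemma quadGroup0'_eq (X : Type*) [AddCommGroup X] :
    quadGroup0' X (AddCircle (1 : ℝ)) = quadGroup0 X := rfl

/-- The group of symmetric biadditive maps. -/
noncomputable def symBilGroup (X N : Type*) [AddCommGroup X] [AddCommGroup N] :
    AddSubgroup (X →+ X →+ N) where
  carrier := {B | ∀ x y, B x y = B y x}
  zero_mem' := fun _ _ => rfl
  add_mem' := by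
    intro a b ha hb x y
    simp only [AddMonoidHom.add_apply, ha x y, hb x y]
  neg_mem' := by
    intro a ha x y
    simp only [AddMonoidHom.neg_apply, ha x y]

lemma zsmul_congr {d : N} {m : ℕ} (hd : (m : ℤ) • d = 0) {u v : ℤ}
    (h : (m : ℤ) ∣ u - v) : u • d = v • d := by
  obtain ⟨t, ht⟩ := h
  have hu : u = v + (m : ℤ) * t := by linarith
  rw [hu, add_smul, mul_comm, mul_smul, hd, smul_zero, add_zero]

lemma prod_smul_congr {d : N} {m₁ m₂ : ℕ} (h1 : (m₁ : ℤ) • d = 0) (h2 : (m₂ : ℤ) • d = 0)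
    {u u' v v' : ℤ} (hu : (m₁ : ℤ) ∣ u - u') (hv : (m₂ : ℤ) ∣ v - v') :
    (u * v) • d = (u' * v') • d := by
  have s1 : (u * v) • d = (u' * v) • d :=
    zsmul_congr h1 (by rw [show u * v - u' * v = (u - u') * v by ring]; exact hu.mul_right v)
  have s2 : (u' * v) • d = (u' * v') • d :=
    zsmul_congr h2 (by rw [show u' * v - u' * v' = u' * (v - v') by ring]; exact hv.mul_left u')
  rw [s1, s2]

lemma sum_smul_congr {d : N} {m₁ m₂ : ℕ} (h1 : (m₁ : ℤ) • d = 0) (h2 : (m₂ : ℤ) • d = 0)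
    {u u' v v' a b : ℤ} (hu : (m₁ : ℤ) ∣ u - u') (hv : (m₂ : ℤ) ∣ v - v') :
    (u * a + b * v) • d = (u' * a + b * v') • d := by
  have s1 : (u * a + b * v) • d = (u' * a + b * v) • d :=
    zsmul_congr h1 (by
      rw [show (u * a + b * v) - (u' * a + b * v) = (u - u') * a by ring]
      exact hu.mul_right a)
  have s2 : (u' * a + b * v) • d = (u' * a + b * v') • d :=
    zsmul_congr h2 (by
      rw [show (u' * a + b * v) - (u' * a + b * v') = b * (v - v') by ring]
      exact hv.mul_left b)
  rw [s1, s2]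

lemma zmod_val_coe {m : ℕ} [NeZero m] (a : ZMod m) : (((a.val : ℤ)) : ZMod m) = a := by
  rw [Int.cast_natCast]; exact ZMod.natCast_rightInverse a

lemma zmod_cast_dvd {m : ℕ} [NeZero m] (a : ZMod m) (u : ℤ) (h : (u : ZMod m) = a) :
    (m : ℤ) ∣ (a.val : ℤ) - u := by
  have hz : (((a.val : ℤ) - u : ℤ) : ZMod m) = 0 := by
    rw [Int.cast_sub, zmod_val_coe, h, sub_self]
  exact (ZMod.intCast_zmod_eq_zero_iff_dvd _ _).mp hz

end Aux

/-! ### The main computation on a direct sum of cyclic groups -/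

section Main

open DirectSum

variable {k : ℕ} (n : Fin k → ℕ) [∀ i, NeZero (n i)] {N : Type*} [AddCommGroup N]

/-- The `i`-th standard generator of `⨁ i, ZMod (n i)`. -/
noncomputable def eef (i : Fin k) : ⨁ i, ZMod (n i) :=
  DirectSum.of (fun i => ZMod (n i)) i 1

lemma eef_apply_same (i : Fin k) : (eef n i) i = 1 := DirectSum.of_eq_same i 1

lemma eef_apply_ne {i j : Fin k} (h : i ≠ j) : (eef n i) j = 0 :=
  DirectSum.of_eq_of_ne _ _ _ h.symm

lemma nsmul_eef (i : Fin k) : n i • eef n i = 0 := by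
  rw [eef, ← map_nsmul, Nat.smul_one_eq_cast, ZMod.natCast_self, map_zero]

lemma of_eq_val_smul (i : Fin k) (c : ZMod (n i)) :
    DirectSum.of (fun i => ZMod (n i)) i c = (c.val) • eef n i := by
  rw [eef, ← map_nsmul, Nat.smul_one_eq_cast, ZMod.natCast_rightInverse c]

lemma ds_nsmul_apply (m : ℕ) (x : ⨁ i, ZMod (n i)) (i : Fin k) :
    (m • x) i = m • (x i) := by
  induction m with
  | zero => simp
  | succ t ih => rw [succ_nsmul, succ_nsmul, DirectSum.add_apply, ih]

lemma ds_neg_apply (x : ⨁ i, ZMod (n i)) (i : Fin k) : (-x) i = -(x i) := by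
  have h : (-x + x) i = (-x) i + x i := DirectSum.add_apply _ _ _
  rw [neg_add_cancel] at h
  have h0 : (0 : ⨁ i, ZMod (n i)) i = 0 := DirectSum.zero_apply _
  rw [h0] at h
  exact eq_neg_of_add_eq_zero_left h.symm

variable (B : (⨁ i, ZMod (n i)) →+ (⨁ i, ZMod (n i)) →+ N)

lemma B_tors_left (i : Fin k) (y : ⨁ i, ZMod (n i)) :
    (n i : ℤ) • B (eef n i) y = 0 := by
  rw [natCast_zsmul, ← AddMonoidHom.nsmul_apply, ← map_nsmul, nsmul_eef, map_zero,
    AddMonoidHom.zero_apply]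

lemma B_tors_right (x : ⨁ i, ZMod (n i)) (j : Fin k) :
    (n j : ℤ) • B x (eef n j) = 0 := by
  rw [natCast_zsmul, ← map_nsmul, nsmul_eef, map_zero]

/-- The set of ordered pairs of indices. -/
noncomputable def sPairs (k : ℕ) : Finset (Fin k × Fin k) :=
  Finset.univ.filter (fun p => p.1 ≤ p.2)

/-- The quadratic form attached to a biadditive map. -/
noncomputable def Phi0 (x : ⨁ i, ZMod (n i)) : N :=
  ∑ p ∈ sPairs k, (((x p.1).val : ℤ) * ((x p.2).val : ℤ)) • B (eef n p.1) (eef n p.2)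

lemma coord_add_dvd (x y : ⨁ i, ZMod (n i)) (i : Fin k) :
    (n i : ℤ) ∣ (((x + y) i).val : ℤ) - (((x i).val : ℤ) + ((y i).val : ℤ)) :=
  zmod_cast_dvd _ _ (by rw [Int.cast_add, zmod_val_coe, zmod_val_coe, DirectSum.add_apply])

lemma polz_Phi0 (x y : ⨁ i, ZMod (n i)) : polz (Phi0 n B) x y =
    ∑ p ∈ sPairs k, ((((x p.1).val : ℤ) * ((y p.2).val : ℤ)) +
      ((y p.1).val : ℤ) * ((x p.2).val : ℤ)) • B (eef n p.1) (eef n p.2) := by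
  unfold polz Phi0
  rw [← Finset.sum_sub_distrib, ← Finset.sum_sub_distrib]
  refine Finset.sum_congr rfl fun p _ => ?_
  have key : ((((x + y) p.1).val : ℤ) * (((x + y) p.2).val : ℤ)) • B (eef n p.1) (eef n p.2)
      = (((((x p.1).val : ℤ) + ((y p.1).val : ℤ))) *
         ((((x p.2).val : ℤ) + ((y p.2).val : ℤ)))) • B (eef n p.1) (eef n p.2) :=
    prod_smul_congr (B_tors_left n B p.1 _) (B_tors_right n B _ p.2)
      (coord_add_dvd n x y p.1) (coord_add_dvd n x y p.2)
  rw [key, show ((((x p.1).val : ℤ) + ((y p.1).val : ℤ))) *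
         ((((x p.2).val : ℤ) + ((y p.2).val : ℤ))) =
      ((((x p.1).val : ℤ) * ((y p.2).val : ℤ)) + ((y p.1).val : ℤ) * ((x p.2).val : ℤ))
      + ((x p.1).val : ℤ) * ((x p.2).val : ℤ)
      + ((y p.1).val : ℤ) * ((y p.2).val : ℤ) by ring, add_smul, add_smul]
  abel

lemma Phi0_mem : Phi0 n B ∈ quadGroup0' (⨁ i, ZMod (n i)) N := by
  have hpolz_addl : ∀ x x' y, polz (Phi0 n B) (x + x') y =
      polz (Phi0 n B) x y + polz (Phi0 n B) x' y := by
    intro x x' y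
    rw [polz_Phi0, polz_Phi0, polz_Phi0, ← Finset.sum_add_distrib]
    refine Finset.sum_congr rfl fun p _ => ?_
    rw [← add_smul]
    have key := sum_smul_congr (B_tors_left n B p.1 (eef n p.2))
      (B_tors_right n B (eef n p.1) p.2)
      (coord_add_dvd n x x' p.1) (coord_add_dvd n x x' p.2)
      (a := ((y p.2).val : ℤ)) (b := ((y p.1).val : ℤ))
    rw [key, show ((((x p.1).val : ℤ) + ((x' p.1).val : ℤ)) * ((y p.2).val : ℤ) +
        ((y p.1).val : ℤ) * (((x p.2).val : ℤ) + ((x' p.2).val : ℤ))) =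
        (((x p.1).val : ℤ) * ((y p.2).val : ℤ) + ((y p.1).val : ℤ) * ((x p.2).val : ℤ)) +
        (((x' p.1).val : ℤ) * ((y p.2).val : ℤ) + ((y p.1).val : ℤ) * ((x' p.2).val : ℤ))
        by ring]
  refine ⟨⟨?_, hpolz_addl, ?_⟩, ?_⟩
  · -- evenness
    intro a
    unfold Phi0
    refine Finset.sum_congr rfl fun p _ => ?_
    have hu : ((- a) p.1 : ZMod (n p.1)) = - (a p.1) := ds_neg_apply n a p.1
    have hv : ((- a) p.2 : ZMod (n p.2)) = - (a p.2) := ds_neg_apply n a p.2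
    have key : (((a p.1).val : ℤ) * ((a p.2).val : ℤ)) • B (eef n p.1) (eef n p.2) =
        ((-((((-a) p.1)).val : ℤ)) * (-((((-a) p.2)).val : ℤ))) • B (eef n p.1) (eef n p.2) := by
      refine prod_smul_congr (B_tors_left n B p.1 _) (B_tors_right n B _ p.2) ?_ ?_
      · exact zmod_cast_dvd _ _ (by rw [Int.cast_neg, zmod_val_coe, hu, neg_neg])
      · exact zmod_cast_dvd _ _ (by rw [Int.cast_neg, zmod_val_coe, hv, neg_neg])
    rw [key, neg_mul_neg]
  · -- right additivity of polz
    intro x y y'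
    rw [polz_symm, hpolz_addl, polz_symm (Phi0 n B) y x, polz_symm (Phi0 n B) y' x]
  · -- torsion
    intro a
    have ha : ∀ i : Fin k, (n i : ℤ) ∣ ((addOrderOf a : ℤ) * ((a i).val : ℤ)) - 0 := by
      intro i
      rw [sub_zero]
      refine (ZMod.intCast_zmod_eq_zero_iff_dvd _ _).mp ?_
      have h5 : addOrderOf a • (a i) = 0 := by
        rw [← ds_nsmul_apply, addOrderOf_nsmul_eq_zero a, DirectSum.zero_apply]
      rw [Int.cast_mul, Int.cast_natCast, zmod_val_coe, ← nsmul_eq_mul, h5]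
    rw [← natCast_zsmul]
    unfold Phi0
    rw [Finset.smul_sum]
    refine Finset.sum_eq_zero fun p _ => ?_
    rw [smul_smul, show (addOrderOf a : ℤ) * ((((a p.1).val : ℤ)) * (((a p.2).val : ℤ))) =
      ((addOrderOf a : ℤ) * ((a p.1).val : ℤ)) * ((a p.2).val : ℤ) by ring]
    have key := prod_smul_congr (B_tors_left n B p.1 (eef n p.2))
      (B_tors_right n B (eef n p.1) p.2) (ha p.1)
      (v := ((a p.2).val : ℤ)) (v' := ((a p.2).val : ℤ)) (by simp)
    rw [key, zero_mul, zero_smul]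

variable (hn : ∀ i, 1 < n i)

include hn in
lemma Phi0_eef (i : Fin k) : Phi0 n B (eef n i) = B (eef n i) (eef n i) := by
  haveI := Fact.mk (hn i)
  unfold Phi0
  rw [Finset.sum_eq_single_of_mem (i, i)
    (by simp [sPairs])]
  · dsimp only
    rw [eef_apply_same n i, ZMod.val_one]
    norm_num
  · rintro ⟨p1, p2⟩ hmem hne
    dsimp only
    by_cases h1 : i = p1
    · subst h1
      have h2 : i ≠ p2 := fun h => hne (by rw [← h])
      rw [eef_apply_ne n h2, ZMod.val_zero]
      norm_num
    · rw [eef_apply_ne n h1, ZMod.val_zero]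
      norm_num

include hn in
lemma polz_Phi0_eef {i j : Fin k} (hij : i < j) :
    polz (Phi0 n B) (eef n i) (eef n j) = B (eef n i) (eef n j) := by
  haveI := Fact.mk (hn i)
  haveI := Fact.mk (hn j)
  rw [polz_Phi0]
  rw [Finset.sum_eq_single_of_mem (i, j) (by simp [sPairs, le_of_lt hij])]
  · dsimp only
    rw [eef_apply_same n i, eef_apply_same n j, eef_apply_ne n hij.ne, eef_apply_ne n hij.ne',
      ZMod.val_one, ZMod.val_one, ZMod.val_zero, ZMod.val_zero]
    norm_num
  · rintro ⟨p1, p2⟩ hmem hne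
    dsimp only
    have hmem' : p1 ≤ p2 := by simpa [sPairs] using hmem
    have e1 : (((eef n i) p1).val : ℤ) * (((eef n j) p2).val : ℤ) = 0 := by
      by_cases h1 : i = p1
      · subst h1
        by_cases h2 : j = p2
        · subst h2; exact absurd rfl hne
        · rw [eef_apply_ne n h2, ZMod.val_zero]; norm_num
      · rw [eef_apply_ne n h1, ZMod.val_zero]; norm_num
    have e2 : (((eef n j) p1).val : ℤ) * (((eef n i) p2).val : ℤ) = 0 := by
      by_cases h1 : j = p1
      · subst h1
        have h2 : i ≠ p2 := by
          intro h; subst h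
          exact absurd (lt_of_lt_of_le hij hmem') (lt_irrefl i)
        rw [eef_apply_ne n h2, ZMod.val_zero]; norm_num
      · rw [eef_apply_ne n h1, ZMod.val_zero]; norm_num
    rw [e1, e2, add_zero, zero_smul]

include hn in
lemma B_expand (x y : ⨁ i, ZMod (n i)) :
    B x y = ∑ i : Fin k, ∑ j : Fin k,
      (x i).val • ((y j).val • B (eef n i) (eef n j)) := by
  calc B x y = (∑ i : Fin k, B (DirectSum.of (fun i => ZMod (n i)) i (x i))) y := by
        rw [← map_sum, DirectSum.sum_univ_of]
    _ = ∑ i : Fin k, (B (DirectSum.of (fun i => ZMod (n i)) i (x i))) y := by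
        rw [AddMonoidHom.finset_sum_apply]
    _ = ∑ i : Fin k, ∑ j : Fin k, (B (DirectSum.of (fun i => ZMod (n i)) i (x i)))
          (DirectSum.of (fun i => ZMod (n i)) j (y j)) := by
        refine Finset.sum_congr rfl fun i _ => ?_
        rw [← map_sum, DirectSum.sum_univ_of]
    _ = ∑ i : Fin k, ∑ j : Fin k, (x i).val • ((y j).val • B (eef n i) (eef n j)) := by
        refine Finset.sum_congr rfl fun i _ => Finset.sum_congr rfl fun j _ => ?_
        simp only [of_eq_val_smul, map_nsmul, AddMonoidHom.nsmul_apply]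
        rw [smul_comm]

/-- The uniqueness lemma: a quadratic form vanishing on the generators with vanishing
off-diagonal polarization is zero. -/
lemma quad_eq_zero {q : (⨁ i, ZMod (n i)) → N} (hq : IsQuadratic q)
    (h0 : ∀ i, q (eef n i) = 0)
    (hp : ∀ i j, i ≠ j → polz q (eef n i) (eef n j) = 0) : ∀ x, q x = 0 := by
  have heef : ∀ (i : Fin k) (y), polz q (eef n i) y = 0 := by
    intro i y
    refine DirectSum.induction_on y (hq.polz_zero_right _) (fun j c => ?_)
      (fun a b iha ihb => by rw [hq.2.2, iha, ihb, add_zero])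
    rw [of_eq_val_smul, hq.polz_nsmul_right]
    rcases eq_or_ne i j with rfl | hij
    · rw [hq.polz_self, h0 i, add_zero, smul_zero]
    · rw [hp i j hij, smul_zero]
  have hpz : ∀ x y, polz q x y = 0 := by
    intro x y
    refine DirectSum.induction_on x (hq.polz_zero_left _) (fun i c => ?_)
      (fun a b iha ihb => by rw [hq.2.1, iha, ihb, add_zero])
    rw [of_eq_val_smul, hq.polz_nsmul_left, heef, smul_zero]
  have hadd : ∀ x y, q (x + y) = q x + q y := by
    intro x y
    have h := hpz x y
    rw [polz, sub_sub, sub_eq_zero] at h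
    exact h
  intro x
  refine DirectSum.induction_on x hq.quad_map_zero (fun i c => ?_)
    (fun a b iha ihb => by rw [hadd, iha, ihb, add_zero])
  rw [of_eq_val_smul]
  have : ∀ m : ℕ, q (m • eef n i) = 0 := by
    intro m
    induction m with
    | zero => simpa using hq.quad_map_zero
    | succ t ih => rw [succ_nsmul, hadd, ih, h0 i, add_zero]
  exact this _

/-- The homomorphism from symmetric biadditive maps to `Quad₀`. -/
noncomputable def PhiHom :
    symBilGroup (⨁ i, ZMod (n i)) N →+ quadGroup0' (⨁ i, ZMod (n i)) N :=
  AddMonoidHom.mk' (fun B => ⟨Phi0 n B.1, Phi0_mem n B.1⟩)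
    (by
      intro B₁ B₂
      refine Subtype.ext (funext fun x => ?_)
      show Phi0 n (B₁.1 + B₂.1) x = Phi0 n B₁.1 x + Phi0 n B₂.1 x
      unfold Phi0
      rw [← Finset.sum_add_distrib]
      refine Finset.sum_congr rfl fun p _ => ?_
      simp [AddMonoidHom.add_apply, smul_add])

include hn in
lemma PhiHom_injective : Function.Injective (PhiHom n (N := N)) := by
  rw [injective_iff_map_eq_zero]
  intro B hB
  have hB0 : Phi0 n B.1 = 0 := congrArg Subtype.val hB
  have hd : ∀ i j, B.1 (eef n i) (eef n j) = 0 := by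
    intro i j
    rcases lt_trichotomy i j with h' | rfl | h'
    · rw [← polz_Phi0_eef n B.1 hn h', hB0]
      simp [polz]
    · rw [← Phi0_eef n B.1 hn i, hB0]
      rfl
    · rw [B.2 (eef n i) (eef n j), ← polz_Phi0_eef n B.1 hn h', hB0]
      simp [polz]
  refine Subtype.ext (AddMonoidHom.ext fun x => AddMonoidHom.ext fun y => ?_)
  rw [B_expand n B.1 hn x y]
  simp only [hd, smul_zero, Finset.sum_const_zero]
  rfl

include hn in
lemma PhiHom_surjective : Function.Surjective (PhiHom n (N := N)) := by
  rintro ⟨q, hq, hq0⟩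
  classical
  set c : Fin k → Fin k → N := fun i j =>
    if i = j then q (eef n i) else polz q (eef n i) (eef n j) with hc
  have hcii : ∀ i, c i i = q (eef n i) := fun i => by simp [hc]
  have hcne : ∀ i j, i ≠ j → c i j = polz q (eef n i) (eef n j) := fun i j hij => by
    simp [hc, if_neg hij]
  have hcsym : ∀ i j, c i j = c j i := by
    intro i j
    rcases eq_or_ne i j with rfl | hij
    · rfl
    · rw [hcne i j hij, hcne j i hij.symm]
      exact polz_symm q _ _
  have hctl : ∀ i j, (n i : ℤ) • c i j = 0 := by
    intro i j
    rw [natCast_zsmul]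
    rcases eq_or_ne i j with rfl | hij
    · rw [hcii i]
      obtain ⟨t, ht⟩ := addOrderOf_dvd_of_nsmul_eq_zero (nsmul_eef n i)
      rw [ht, mul_comm, mul_smul, hq0 (eef n i), smul_zero]
    · rw [hcne i j hij]
      rw [← hq.polz_nsmul_left, nsmul_eef, hq.polz_zero_left]
  have hctr : ∀ i j, (n j : ℤ) • c i j = 0 := by
    intro i j
    rw [hcsym]
    exact hctl j i
  set Bf : (⨁ i, ZMod (n i)) → (⨁ i, ZMod (n i)) → N := fun x y =>
    ∑ i : Fin k, ∑ j : Fin k, (((x i).val : ℤ) * ((y j).val : ℤ)) • c i j with hBf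
  have hBaddl : ∀ x x' y, Bf (x + x') y = Bf x y + Bf x' y := by
    intro x x' y
    rw [hBf]
    simp only
    rw [← Finset.sum_add_distrib]
    refine Finset.sum_congr rfl fun i _ => ?_
    rw [← Finset.sum_add_distrib]
    refine Finset.sum_congr rfl fun j _ => ?_
    rw [← add_smul]
    have key := prod_smul_congr (hctl i j) (hctr i j)
      (coord_add_dvd n x x' i) ((sub_self (((y j).val : ℤ))) ▸ dvd_zero (n j : ℤ))
    rw [key, add_mul]
  have hBaddr : ∀ x y y', Bf x (y + y') = Bf x y + Bf x y' := by
    intro x y y'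
    rw [hBf]
    simp only
    rw [← Finset.sum_add_distrib]
    refine Finset.sum_congr rfl fun i _ => ?_
    rw [← Finset.sum_add_distrib]
    refine Finset.sum_congr rfl fun j _ => ?_
    rw [← add_smul]
    have key := prod_smul_congr (hctl i j) (hctr i j)
      ((sub_self (((x i).val : ℤ))) ▸ dvd_zero (n i : ℤ)) (coord_add_dvd n y y' j)
    rw [key, mul_add]
  set B : (⨁ i, ZMod (n i)) →+ (⨁ i, ZMod (n i)) →+ N :=
    AddMonoidHom.mk' (fun x => AddMonoidHom.mk' (Bf x) (fun y y' => hBaddr x y y'))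
      (fun x x' => AddMonoidHom.ext fun y => hBaddl x x' y) with hB
  have hBapp : ∀ x y, B x y = Bf x y := fun x y => rfl
  have hBsym : ∀ x y, B x y = B y x := by
    intro x y
    rw [hBapp, hBapp, hBf]
    simp only
    rw [Finset.sum_comm]
    refine Finset.sum_congr rfl fun i _ => Finset.sum_congr rfl fun j _ => ?_
    rw [mul_comm, hcsym j i]
  have hBeef : ∀ i j, B (eef n i) (eef n j) = c i j := by
    intro i j
    haveI := Fact.mk (hn i)
    haveI := Fact.mk (hn j)
    rw [hBapp, hBf]
    simp only
    rw [Finset.sum_eq_single_of_mem i (Finset.mem_univ i)]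
    · rw [Finset.sum_eq_single_of_mem j (Finset.mem_univ j)]
      · rw [eef_apply_same n i, eef_apply_same n j, ZMod.val_one, ZMod.val_one]
        norm_num
      · intro b _ hb
        rw [eef_apply_ne n (Ne.symm hb), ZMod.val_zero]
        norm_num
    · intro b _ hb
      refine Finset.sum_eq_zero fun j' _ => ?_
      rw [eef_apply_ne n (Ne.symm hb), ZMod.val_zero]
      norm_num
  refine ⟨⟨B, hBsym⟩, Subtype.ext ?_⟩
  show Phi0 n B = q
  have hmem : Phi0 n B ∈ QuadGroup' (⨁ i, ZMod (n i)) N := (Phi0_mem n B).1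
  have hdiff : Phi0 n B - q ∈ QuadGroup' (⨁ i, ZMod (n i)) N :=
    (QuadGroup' _ _).sub_mem hmem hq
  have hz : ∀ x, (Phi0 n B - q) x = 0 := by
    refine quad_eq_zero n hdiff (fun i => ?_) (fun i j hij => ?_)
    · show Phi0 n B (eef n i) - q (eef n i) = 0
      rw [Phi0_eef n B hn i, hBeef i i, hcii i, sub_self]
    · have hps : polz (Phi0 n B - q) (eef n i) (eef n j) =
          polz (Phi0 n B) (eef n i) (eef n j) - polz q (eef n i) (eef n j) :=
        polz_sub_fun _ _ _ _
      rw [hps]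
      have hqv : polz q (eef n i) (eef n j) = c i j := (hcne i j hij).symm
      rcases lt_or_gt_of_ne hij with h' | h'
      · rw [polz_Phi0_eef n B hn h', hBeef i j, hqv, sub_self]
      · rw [polz_symm, polz_Phi0_eef n B hn h', hBeef j i, ← hcsym i j, hqv, sub_self]
  funext x
  have := hz x
  rw [Pi.sub_apply, sub_eq_zero] at this
  exact this

/-- The main isomorphism on a direct sum of cyclic groups. -/
noncomputable def mainEquiv :
    symBilGroup (⨁ i, ZMod (n i)) N ≃+ quadGroup0' (⨁ i, ZMod (n i)) N :=
  AddEquiv.ofBijective (PhiHom n) ⟨PhiHom_injective n hn, PhiHom_surjective n hn⟩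

end Main

/-! ### Transport along group isomorphisms -/

section Transport

variable {X Y N : Type*} [AddCommGroup X] [AddCommGroup Y] [AddCommGroup N]

lemma polz_comp (γ : X → N) (e : Y ≃+ X) (x y : Y) :
    polz (γ ∘ e) x y = polz γ (e x) (e y) := by
  simp [polz, map_add]

lemma quad_mem_comp {γ : X → N} (e : Y ≃+ X)
    (h : γ ∈ quadGroup0' X N) : γ ∘ e ∈ quadGroup0' Y N := by
  obtain ⟨⟨h1, h2, h3⟩, h0⟩ := h
  refine ⟨⟨fun a => ?_, fun x x' y => ?_, fun x y y' => ?_⟩, fun a => ?_⟩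
  · show γ (e a) = γ (e (-a))
    rw [map_neg, ← h1]
  · rw [polz_comp _ e, polz_comp _ e, polz_comp _ e, map_add]
    exact h2 (e x) (e x') (e y)
  · rw [polz_comp _ e, polz_comp _ e, polz_comp _ e, map_add]
    exact h3 (e x) (e y) (e y')
  · show addOrderOf a • γ (e a) = 0
    rw [← addOrderOf_injective e.toAddMonoidHom e.injective a]
    exact h0 (e a)

/-- Transport of `Quad₀` along a group isomorphism. -/
noncomputable def quadTransport (e : X ≃+ Y) :
    quadGroup0' X N ≃+ quadGroup0' Y N where
  toFun γ := ⟨γ.1 ∘ e.symm, quad_mem_comp e.symm γ.2⟩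
  invFun γ := ⟨γ.1 ∘ e, quad_mem_comp e γ.2⟩
  left_inv γ := Subtype.ext (funext fun x => by simp)
  right_inv γ := Subtype.ext (funext fun x => by simp)
  map_add' γ₁ γ₂ := Subtype.ext rfl

/-- Transport of symmetric biadditive maps along a group isomorphism. -/
noncomputable def symBilTransport (e : Y ≃+ X) :
    symBilGroup X N ≃+ symBilGroup Y N where
  toFun B := ⟨AddMonoidHom.mk' (fun y => (B.1 (e y)).comp e.toAddMonoidHom)
      (by intro y y'; rw [map_add, map_add, AddMonoidHom.add_comp]),
    fun x y => B.2 (e x) (e y)⟩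
  invFun B := ⟨AddMonoidHom.mk' (fun x => (B.1 (e.symm x)).comp e.symm.toAddMonoidHom)
      (by intro x x'; rw [map_add, map_add, AddMonoidHom.add_comp]),
    fun x y => B.2 (e.symm x) (e.symm y)⟩
  left_inv B := Subtype.ext (AddMonoidHom.ext fun x => AddMonoidHom.ext fun y => by
    simp)
  right_inv B := Subtype.ext (AddMonoidHom.ext fun x => AddMonoidHom.ext fun y => by
    simp)
  map_add' B₁ B₂ := Subtype.ext (AddMonoidHom.ext fun x => AddMonoidHom.ext fun y => by
    simp)

end Transport

/-! ### Symmetric biadditive maps and the second symmetric power -/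

section SymPower

open TensorProduct

variable {X N : Type*} [AddCommGroup X] [AddCommGroup N]

lemma symPower2_hom_ext {f g : symPower2 X →+ N}
    (h : ∀ a b : X, f (Submodule.Quotient.mk (a ⊗ₜ[ℤ] b)) =
      g (Submodule.Quotient.mk (a ⊗ₜ[ℤ] b))) : f = g := by
  ext z
  obtain ⟨t, rfl⟩ := Submodule.Quotient.mk_surjective _ z
  induction t using TensorProduct.induction_on with
  | zero =>
    show f (Submodule.Quotient.mk 0) = g (Submodule.Quotient.mk 0)
    rw [Submodule.Quotient.mk_zero, map_zero, map_zero]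
  | tmul a b => exact h a b
  | add s t ihs iht =>
    show f (Submodule.Quotient.mk (s + t)) = g (Submodule.Quotient.mk (s + t))
    rw [Submodule.Quotient.mk_add, map_add, map_add, ihs, iht]

/-- The bilinear map underlying a symmetric biadditive map, as a ℤ-linear map. -/
noncomputable def toBilin (B : symBilGroup X N) : X →ₗ[ℤ] X →ₗ[ℤ] N :=
  LinearMap.mk₂ ℤ (fun a b => B.1 a b)
    (fun a a' b => by rw [map_add, AddMonoidHom.add_apply])
    (fun z a b => by rw [map_zsmul]; rfl)
    (fun a b b' => by rw [map_add])
    (fun z a b => by rw [map_zsmul])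

/-- The homomorphism on `S²(X)` induced by a symmetric biadditive map. -/
noncomputable def psiFun (B : symBilGroup X N) : symPower2 X →+ N :=
  (Submodule.liftQ _ (TensorProduct.lift (toBilin B))
    (by
      refine Submodule.span_le.mpr ?_
      rintro x ⟨a, b, rfl⟩
      show TensorProduct.lift (toBilin B) (a ⊗ₜ[ℤ] b - b ⊗ₜ[ℤ] a) = 0
      rw [map_sub, TensorProduct.lift.tmul, TensorProduct.lift.tmul]
      show B.1 a b - B.1 b a = 0
      rw [B.2 a b, sub_self])).toAddMonoidHom

lemma psiFun_apply (B : symBilGroup X N) (a b : X) :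
    psiFun B (Submodule.Quotient.mk (a ⊗ₜ[ℤ] b)) = B.1 a b := by
  simp only [psiFun, LinearMap.toAddMonoidHom_coe, Submodule.liftQ_apply,
    TensorProduct.lift.tmul, LinearMap.mk₂_apply, toBilin]
  rfl

/-- The inverse construction. -/
noncomputable def psiInv (f : symPower2 X →+ N) : symBilGroup X N :=
  ⟨AddMonoidHom.mk' (fun a => AddMonoidHom.mk'
      (fun b => f (Submodule.Quotient.mk (a ⊗ₜ[ℤ] b)))
      (fun b b' => by rw [TensorProduct.tmul_add, Submodule.Quotient.mk_add,
        map_add]))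
    (fun a a' => AddMonoidHom.ext fun b => by
      show f (Submodule.Quotient.mk ((a + a') ⊗ₜ[ℤ] b)) = _
      rw [TensorProduct.add_tmul, Submodule.Quotient.mk_add, map_add]
      rfl),
  fun a b => by
    show f (Submodule.Quotient.mk (a ⊗ₜ[ℤ] b)) = f (Submodule.Quotient.mk (b ⊗ₜ[ℤ] a))
    refine congrArg f ?_
    rw [Submodule.Quotient.eq]
    exact Submodule.subset_span ⟨a, b, rfl⟩⟩

/-- The isomorphism between symmetric biadditive maps and `Hom(S²(X), N)`. -/
noncomputable def symBilEquivHom : symBilGroup X N ≃+ (symPower2 X →+ N) where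
  toFun := psiFun
  invFun := psiInv
  left_inv B := Subtype.ext (AddMonoidHom.ext fun a => AddMonoidHom.ext fun b =>
    psiFun_apply B a b)
  right_inv f := symPower2_hom_ext (fun a b => psiFun_apply (psiInv f) a b)
  map_add' B₁ B₂ := symPower2_hom_ext (fun a b => by
    show psiFun (B₁ + B₂) _ = (psiFun B₁ + psiFun B₂) _
    rw [psiFun_apply, AddMonoidHom.add_apply, psiFun_apply, psiFun_apply]
    rfl)

end SymPower

/-- For a finite abelian group `A`, `Quad₀(A, ℝ/ℤ) ≅ Hom(S²(A), ℝ/ℤ)`. -/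
theorem quadGroup0_iso_hom_symPower2 (A : Type*) [AddCommGroup A] [Finite A] :
    Nonempty (quadGroup0 A ≃+ (symPower2 A →+ AddCircle (1 : ℝ))) := by
  obtain ⟨ι, hι, n0, h1, ⟨e0⟩⟩ := AddCommGroup.equiv_directSum_zmod_of_finite' A
  haveI := hι
  let eqf := Fintype.equivFin ι
  set n : Fin (Fintype.card ι) → ℕ := fun j => n0 (eqf.symm j) with hndef
  haveI : ∀ j, NeZero (n j) := fun j => NeZero.of_pos (lt_trans zero_lt_one (h1 (eqf.symm j)))
  have hn : ∀ j, 1 < n j := fun j => h1 _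
  let e : A ≃+ DirectSum (Fin (Fintype.card ι)) (fun j => ZMod (n j)) :=
    e0.trans (DirectSum.equivCongrLeft eqf)
  have E1 : quadGroup0' A (AddCircle (1 : ℝ)) ≃+
      quadGroup0' (DirectSum (Fin (Fintype.card ι)) (fun j => ZMod (n j)))
        (AddCircle (1 : ℝ)) := quadTransport e
  have E2 := (mainEquiv n hn (N := AddCircle (1 : ℝ))).symm
  have E3 : symBilGroup (DirectSum (Fin (Fintype.card ι)) (fun j => ZMod (n j)))
      (AddCircle (1 : ℝ)) ≃+ symBilGroup A (AddCircle (1 : ℝ)) := symBilTransport e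
  exact ⟨(AddEquiv.addSubgroupCongr (quadGroup0'_eq A).symm).trans
    ((((E1.trans E2).trans E3).trans symBilEquivHom))⟩
end

section
/- Let A be a finite abelian group of odd order. Then every quadratic form q : A → ℝ/ℤ satisfies o(a)·q(a) = 0 for all a ∈ A, where o(a) is the order of a; equivalently, Quad(A, ℝ/ℤ) = Quad₀(A, ℝ/ℤ) ≅ Hom(S²(A), ℝ/ℤ). -/
variable {A B : Type*} [AddCommGroup A] [AddCommGroup B]

section Aux

variable {q : A → B}

lemma polz_symm' (q : A → B) (x y : A) : polz q x y = polz q y x := by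
  simp only [polz, add_comm x y]; abel

lemma quad_apply_zero (hq : IsQuadratic q) : q 0 = 0 := by
  have h := hq.2.1 0 0 0
  simp only [add_zero] at h
  have h0 : polz q 0 0 = 0 := by
    have h' : polz q 0 0 + polz q 0 0 = polz q 0 0 + 0 := by rw [add_zero, ← h]
    exact add_left_cancel h'
  simp only [polz, add_zero] at h0
  have h1 : -(q 0) = 0 := by rw [← h0]; abel
  simpa using h1

lemma polz_zero_left (hq : IsQuadratic q) (y : A) : polz q 0 y = 0 := by
  have h := hq.2.1 0 0 y
  simp only [add_zero] at h
  have h' : polz q 0 y + polz q 0 y = polz q 0 y + 0 := by rw [add_zero, ← h]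
  exact add_left_cancel h'

lemma polz_zero_right (hq : IsQuadratic q) (x : A) : polz q x 0 = 0 := by
  have h := hq.2.2 x 0 0
  simp only [add_zero] at h
  have h' : polz q x 0 + polz q x 0 = polz q x 0 + 0 := by rw [add_zero, ← h]
  exact add_left_cancel h'

lemma quad_add (q : A → B) (x y : A) : q (x + y) = q x + q y + polz q x y := by
  simp only [polz]; abel

lemma polz_self (hq : IsQuadratic q) (a : A) : polz q a a = 2 • q a := by
  have h := hq.2.2 a a (-a)
  rw [add_neg_cancel, polz_zero_right hq] at h
  have hneg : polz q a (-a) = -(2 • q a) := by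
    simp only [polz, add_neg_cancel, quad_apply_zero hq, ← hq.1 a, two_nsmul]
    abel
  rw [hneg] at h
  have h2 := (add_eq_zero_iff_eq_neg.mp h.symm)
  rw [h2, neg_neg]

lemma polz_nsmul_left (hq : IsQuadratic q) (a b : A) (k : ℕ) :
    polz q (k • a) b = k • polz q a b := by
  induction k with
  | zero => simpa using polz_zero_left hq b
  | succ n ih =>
    rw [succ_nsmul, hq.2.1, ih, succ_nsmul]

lemma quad_nsmul (hq : IsQuadratic q) (a : A) (k : ℕ) :
    q (k • a) = (k * k) • q a := by
  induction k with
  | zero => simpa using quad_apply_zero hq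
  | succ n ih =>
    rw [succ_nsmul, quad_add q (n • a) a, ih, polz_nsmul_left hq, polz_self hq]
    have hk : (n + 1) * (n + 1) = n * n + 1 + 2 * n := by ring
    rw [hk, add_nsmul, add_nsmul, one_nsmul, mul_nsmul, mul_nsmul]

lemma quad_orderOf_smul (hq : IsQuadratic q) (a : A) (ho : Odd (addOrderOf a)) :
    addOrderOf a • q a = 0 := by
  set n := addOrderOf a with hn
  have h1 : (n * n) • q a = 0 := by
    rw [← quad_nsmul hq, addOrderOf_nsmul_eq_zero, quad_apply_zero hq]
  have h2 : (2 * n) • q a = 0 := by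
    have := polz_nsmul_left hq a a n
    rw [addOrderOf_nsmul_eq_zero, polz_zero_left hq, polz_self hq] at this
    rw [mul_nsmul]
    exact this.symm
  obtain ⟨c, hc⟩ := ho
  have hnn : (n + 1) * n = n * n + n := by ring
  have hnn2 : (n + 1) * n = 2 * n * (c + 1) := by rw [hc]; ring
  have hfin : ((n + 1) * n) • q a = n • q a := by
    rw [hnn, add_nsmul, h1, zero_add]
  rw [hnn2, mul_nsmul, h2, smul_zero] at hfin
  exact hfin.symm

end Aux

section Equiv

open TensorProduct

variable (f : symPower2 A →+ AddCircle (1 : ℝ))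

/-- The relation submodule. -/
abbrev symRel (A : Type*) [AddCommGroup A] : Submodule ℤ (TensorProduct ℤ A A) :=
  Submodule.span ℤ {x : TensorProduct ℤ A A | ∃ a b : A, x = a ⊗ₜ[ℤ] b - b ⊗ₜ[ℤ] a}

lemma symPower2_mk_comm (x y : A) :
    (Submodule.Quotient.mk (x ⊗ₜ[ℤ] y) : symPower2 A)
      = Submodule.Quotient.mk (y ⊗ₜ[ℤ] x) := by
  rw [Submodule.Quotient.eq]
  exact Submodule.subset_span ⟨x, y, rfl⟩

/-- The quadratic form attached to a hom on `S²(A)`. -/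
noncomputable def toQuad (f : symPower2 A →+ AddCircle (1 : ℝ)) : A → AddCircle (1 : ℝ) :=
  fun a => f (Submodule.Quotient.mk (a ⊗ₜ[ℤ] a))

lemma toQuad_polz (x y : A) :
    polz (toQuad f) x y = f (Submodule.Quotient.mk (x ⊗ₜ[ℤ] y))
      + f (Submodule.Quotient.mk (y ⊗ₜ[ℤ] x)) := by
  have hexp : (x + y) ⊗ₜ[ℤ] (x + y)
      = x ⊗ₜ[ℤ] x + (y ⊗ₜ[ℤ] y + (x ⊗ₜ[ℤ] y + y ⊗ₜ[ℤ] x)) := by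
    rw [add_tmul, tmul_add, tmul_add]; abel
  simp only [polz, toQuad, hexp, Submodule.Quotient.mk_add, map_add]
  abel

lemma toQuad_isQuadratic : IsQuadratic (toQuad f) := by
  refine ⟨fun a => by simp [toQuad, neg_tmul, tmul_neg], fun x x' y => ?_, fun x y y' => ?_⟩
  · simp only [toQuad_polz, add_tmul, tmul_add, Submodule.Quotient.mk_add, map_add]
    abel
  · simp only [toQuad_polz, add_tmul, tmul_add, Submodule.Quotient.mk_add, map_add]
    abel

/-- Extensionality for homs out of `S²(A)`. -/
lemma symPower2_hom_ext_s13 {C : Type*} [AddCommGroup C] {f g : symPower2 A →+ C}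
    (h : ∀ x y : A, f (Submodule.Quotient.mk (x ⊗ₜ[ℤ] y))
      = g (Submodule.Quotient.mk (x ⊗ₜ[ℤ] y))) : f = g := by
  have key : (f.comp (symRel A).mkQ.toAddMonoidHom).toIntLinearMap
      = (g.comp (symRel A).mkQ.toAddMonoidHom).toIntLinearMap := by
    apply TensorProduct.ext'
    intro x y
    exact h x y
  ext z
  obtain ⟨t, rfl⟩ := Submodule.Quotient.mk_surjective _ z
  have := congrArg (fun F => F t) key
  simpa using this

variable (M : ℕ) (q : A → AddCircle (1 : ℝ)) (hq : IsQuadratic q)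

/-- The bilinear form `M • polz q` as a ℤ-bilinear map. -/
noncomputable def quadBilin : A →ₗ[ℤ] A →ₗ[ℤ] AddCircle (1 : ℝ) :=
  LinearMap.mk₂ ℤ (fun x y => M • polz q x y)
    (fun x x' y => show M • polz q (x + x') y = M • polz q x y + M • polz q x' y by
      rw [hq.2.1, smul_add])
    (fun c x y =>
      map_zsmul (AddMonoidHom.mk' (fun x => M • polz q x y)
        (fun a b => show M • polz q (a + b) y = M • polz q a y + M • polz q b y by
          rw [hq.2.1, smul_add])) c x)
    (fun x y y' => show M • polz q x (y + y') = M • polz q x y + M • polz q x y' by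
      rw [hq.2.2, smul_add])
    (fun c x y =>
      map_zsmul (AddMonoidHom.mk' (fun y => M • polz q x y)
        (fun a b => show M • polz q x (a + b) = M • polz q x a + M • polz q x b by
          rw [hq.2.2, smul_add])) c y)

/-- The hom on `S²(A)` attached to a quadratic form. -/
noncomputable def quadToHom : symPower2 A →+ AddCircle (1 : ℝ) :=
  (Submodule.liftQ (symRel A) (TensorProduct.lift (quadBilin M q hq)) (by
    rw [Submodule.span_le]
    rintro _ ⟨a, b, rfl⟩
    show TensorProduct.lift (quadBilin M q hq) (a ⊗ₜ[ℤ] b - b ⊗ₜ[ℤ] a) = 0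
    rw [map_sub, TensorProduct.lift.tmul, TensorProduct.lift.tmul]
    show M • polz q a b - M • polz q b a = 0
    rw [polz_symm' q a b, sub_self])).toAddMonoidHom

lemma quadToHom_mk (x y : A) :
    quadToHom M q hq (Submodule.Quotient.mk (x ⊗ₜ[ℤ] y)) = M • polz q x y := by
  show TensorProduct.lift (quadBilin M q hq) (x ⊗ₜ[ℤ] y) = _
  rw [TensorProduct.lift.tmul]
  rfl

end Equiv

/-- For a finite abelian group of odd order, every quadratic form `q` satisfies
`o(a)·q(a) = 0`, and `Quad(A, ℝ/ℤ) = Quad₀(A, ℝ/ℤ) ≅ Hom(S²(A), ℝ/ℤ)`. -/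
theorem odd_order_quad_eq_quad0 (A : Type*) [AddCommGroup A] [Finite A]
    (hodd : Odd (Nat.card A)) :
    (∀ q : A → AddCircle (1 : ℝ), IsQuadratic q → ∀ a : A, addOrderOf a • q a = 0) ∧
    Nonempty (QuadGroup A ≃+ (symPower2 A →+ AddCircle (1 : ℝ))) := by
  have key : ∀ q : A → AddCircle (1 : ℝ), IsQuadratic q → ∀ a : A,
      addOrderOf a • q a = 0 := fun q hq a =>
    quad_orderOf_smul hq a (hodd.of_dvd_nat (addOrderOf_dvd_natCard a))
  refine ⟨key, ?_⟩
  set N := Nat.card A with hN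
  obtain ⟨c, hc⟩ := hodd
  set M := c + 1 with hM
  have h2M : 2 * M = N + 1 := by omega
  -- N • x = 0 in A
  have hNA : ∀ a : A, N • a = 0 := fun a => by
    simpa using (addOrderOf_nsmul_eq_zero a).symm ▸ card_nsmul_eq_zero' (x := a)
  -- N • q a = 0 for quadratic q
  have hNq : ∀ q : A → AddCircle (1 : ℝ), IsQuadratic q → ∀ a : A, N • q a = 0 := by
    intro q hq a
    obtain ⟨k, hk⟩ := addOrderOf_dvd_natCard a
    rw [hN, hk, mul_nsmul, key q hq a, smul_zero]
  refine ⟨AddEquiv.mk' (Equiv.mk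
    (fun q => quadToHom M q.1 q.2)
    (fun f => ⟨toQuad f, toQuad_isQuadratic f⟩) ?_ ?_) ?_⟩
  · -- left inverse
    rintro ⟨q, hq⟩
    ext a
    show toQuad (quadToHom M q hq) a = q a
    show quadToHom M q hq (Submodule.Quotient.mk (a ⊗ₜ[ℤ] a)) = q a
    rw [quadToHom_mk M q hq, polz_self (q := q) hq, ← mul_nsmul, h2M, add_nsmul, one_nsmul,
      hNq q hq a, zero_add]
  · -- right inverse
    intro f
    apply symPower2_hom_ext_s13
    intro x y
    show quadToHom M (toQuad f) (toQuad_isQuadratic f) (Submodule.Quotient.mk (x ⊗ₜ[ℤ] y)) = f (Submodule.Quotient.mk (x ⊗ₜ[ℤ] y))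
    rw [quadToHom_mk, toQuad_polz, symPower2_mk_comm y x, ← two_nsmul, ← mul_nsmul, h2M,
      add_nsmul, one_nsmul]
    have hz : N • (Submodule.Quotient.mk (x ⊗ₜ[ℤ] y) : symPower2 A) = 0 := by
      have h1 : (N : ℤ) • (x ⊗ₜ[ℤ] y) = ((N : ℤ) • x) ⊗ₜ[ℤ] y :=
        TensorProduct.smul_tmul' _ _ _
      have h2 : ((N : ℤ) • x) = 0 := by rw [natCast_zsmul, hNA]
      calc N • (Submodule.Quotient.mk (x ⊗ₜ[ℤ] y) : symPower2 A)
          = Submodule.Quotient.mk (N • (x ⊗ₜ[ℤ] y)) := rfl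
        _ = Submodule.Quotient.mk ((N : ℤ) • (x ⊗ₜ[ℤ] y)) := by rw [natCast_zsmul]
        _ = 0 := by rw [h1, h2]; simp
    rw [← map_nsmul, hz, map_zero, zero_add]
  · -- additivity
    rintro ⟨q, hq⟩ ⟨q', hq'⟩
    apply symPower2_hom_ext_s13
    intro x y
    simp only [AddMonoidHom.add_apply, quadToHom_mk]
    show M • polz (q + q') x y = M • polz q x y + M • polz q' x y
    rw [polz_add_fun, smul_add]
end
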